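/- arXiv:2310.01655 — 2 statements merged into one kernel-verified Lean document; each statement's English description precedes it below -/
import Mathlib

section
/- Let t ≥ 2 be an even integer, ε ∈ (0, 1/5] and δ ∈ (0, 1). Let S be a random d×r real matrix satisfying both the (ε, δ, t)-approximate-bilinear property and the (ε, δ, 2t)-approximate-bilinear property. Then for any fixed matrices C ∈ ℝ^{n×d} and D ∈ ℝ^{m×d}, the random variable X := ‖(CS)^{⊗2}((DS)^{⊗2})^⊤ − C^{⊗2}(D^{⊗2})^⊤‖_F satisfies ‖X‖_{L^t} ≤ √5 · ε · δ^{1/t} · ‖C^{⊗2}‖_F · ‖D^{⊗2}‖_F. -/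
open MeasureTheory Matrix

/-- The `L^t` norm of a real random variable: `(E[|X|^t])^(1/t)`. -/
noncomputable def Lnorm {Ω : Type*} [MeasurableSpace Ω] (μ : Measure Ω) (t : ℝ)
    (X : Ω → ℝ) : ℝ :=
  (∫ ω, |X ω| ^ t ∂μ) ^ (1 / t)

/-- Euclidean (ℓ₂) norm of a vector. -/
noncomputable def norm2 {d : ℕ} (x : Fin d → ℝ) : ℝ := Real.sqrt (∑ i, (x i) ^ 2)

/-- Frobenius norm of a matrix. -/
noncomputable def frob {n m : Type*} [Fintype n] [Fintype m] (M : Matrix n m ℝ) : ℝ :=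
  Real.sqrt (∑ i, ∑ j, (M i j) ^ 2)

/-- Self-tensor of a vector: `(a^{⊗2})_{(i,j)} = a_i a_j`. -/
def tensor2 {m : ℕ} (a : Fin m → ℝ) : Fin m × Fin m → ℝ := fun p => a p.1 * a p.2

/-- Row-wise self-tensoring of a matrix: each row `c_i` is replaced by `c_i^{⊗2}`. -/
def tensor2M {n m : ℕ} (C : Matrix (Fin n) (Fin m) ℝ) : Matrix (Fin n) (Fin m × Fin m) ℝ :=
  Matrix.of fun i => tensor2 (C i)

/-- A random `d × r` matrix `S` satisfies the `(ε, δ, t)`-approximate-bilinear property if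
for all `x, y ∈ ℝ^d`, `‖⟨Sᵀx, Sᵀy⟩ − ⟨x, y⟩‖_{L^t} ≤ ε δ^{1/t} ‖x‖₂ ‖y‖₂`. -/
def ApproxBilinear {Ω : Type*} [MeasurableSpace Ω] (μ : Measure Ω) (ε δ : ℝ) (t : ℕ)
    {d r : ℕ} (S : Ω → Matrix (Fin d) (Fin r) ℝ) : Prop :=
  ∀ x y : Fin d → ℝ,
    Lnorm μ (t : ℝ) (fun ω => dotProduct ((S ω)ᵀ *ᵥ x) ((S ω)ᵀ *ᵥ y) - dotProduct x y)
      ≤ ε * δ ^ ((1 : ℝ) / t) * norm2 x * norm2 y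

open scoped ENNReal NNReal

/-! ### auxiliary lemmas -/

lemma Lnorm_nonneg {Ω : Type*} [MeasurableSpace Ω] (μ : Measure Ω) (t : ℝ) (f : Ω → ℝ) :
    0 ≤ Lnorm μ t f := by
  refine Real.rpow_nonneg (integral_nonneg fun ω => ?_) _
  exact Real.rpow_nonneg (abs_nonneg _) _

lemma ofReal_Lnorm_eq {Ω : Type*} [MeasurableSpace Ω] (μ : Measure Ω) {t : ℝ} (ht : 0 < t)
    {f : Ω → ℝ}
    (hint : Integrable (fun ω => |f ω| ^ t) μ) :
    ENNReal.ofReal (Lnorm μ t f) = eLpNorm f (ENNReal.ofReal t) μ := by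
  have h1 : ∀ ω, ENNReal.ofReal (|f ω| ^ t) = (‖f ω‖₊ : ℝ≥0∞) ^ t := by
    intro ω
    rw [← Real.norm_eq_abs, ← enorm_eq_nnnorm, ← ofReal_norm,
      ← ENNReal.ofReal_rpow_of_nonneg (norm_nonneg _) ht.le]
  set L : ℝ≥0∞ := ∫⁻ ω, (‖f ω‖₊ : ℝ≥0∞) ^ t ∂μ with hL
  have hLfin : L ≠ ⊤ := by
    have h2 := hint.2
    rw [hasFiniteIntegral_iff_norm] at h2
    refine ne_of_lt (lt_of_le_of_lt (le_of_eq ?_) h2)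
    rw [hL]
    refine lintegral_congr fun ω => ?_
    rw [← h1 ω, Real.norm_eq_abs, abs_of_nonneg (Real.rpow_nonneg (abs_nonneg _) t)]
  have hInt : ∫ ω, |f ω| ^ t ∂μ = L.toReal := by
    rw [integral_eq_lintegral_of_nonneg_ae
      (Filter.Eventually.of_forall fun ω => Real.rpow_nonneg (abs_nonneg _) t)
      hint.aestronglyMeasurable]
    congr 1
    exact lintegral_congr fun ω => h1 ω
  rw [eLpNorm_eq_lintegral_rpow_enorm_toReal (by simpa using ht) ENNReal.ofReal_ne_top,
    ENNReal.toReal_ofReal ht.le]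
  simp only [enorm_eq_nnnorm]
  rw [Lnorm, hInt, ← hL]
  rw [← ENNReal.ofReal_rpow_of_nonneg ENNReal.toReal_nonneg (by positivity),
    ENNReal.ofReal_toReal hLfin]

lemma Lnorm_eq_toReal {Ω : Type*} [MeasurableSpace Ω] (μ : Measure Ω) {t : ℝ} (ht : 0 < t)
    {f : Ω → ℝ}
    (hint : Integrable (fun ω => |f ω| ^ t) μ) :
    Lnorm μ t f = (eLpNorm f (ENNReal.ofReal t) μ).toReal := by
  rw [← ofReal_Lnorm_eq μ ht hint, ENNReal.toReal_ofReal (Lnorm_nonneg _ _ _)]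

lemma add_pow_le' {u v : ℝ} (hu : 0 ≤ u) (hv : 0 ≤ v) (t : ℕ) :
    (u + v) ^ t ≤ 2 ^ t * (u ^ t + v ^ t) := by
  have h1 : u + v ≤ 2 * max u v := by
    rcases le_total u v with h | h
    · simp [max_eq_right h]; linarith
    · simp [max_eq_left h]; linarith
  calc (u + v) ^ t ≤ (2 * max u v) ^ t := pow_le_pow_left₀ (by positivity) h1 t
    _ = 2 ^ t * (max u v) ^ t := mul_pow 2 _ t
    _ ≤ 2 ^ t * (u ^ t + v ^ t) := by
        gcongr
        rcases le_total u v with h | h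
        · rw [max_eq_right h]; nlinarith [pow_nonneg hu t, pow_nonneg hv t]
        · rw [max_eq_left h]; nlinarith [pow_nonneg hu t, pow_nonneg hv t]

lemma pow_le_one_add_pow {a : ℝ} (ha : 0 ≤ a) (t : ℕ) : a ^ t ≤ 1 + a ^ (2 * t) := by
  rcases le_total a 1 with h | h
  · have := pow_le_one₀ ha h (n := t)
    nlinarith [pow_nonneg ha (2 * t)]
  · have h2 : a ^ t ≤ a ^ (2 * t) := pow_le_pow_right₀ h (by omega)
    linarith

lemma tensor2M_mul_entry {n m r : ℕ} (A : Matrix (Fin n) (Fin r) ℝ)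
    (B : Matrix (Fin m) (Fin r) ℝ) (i : Fin n) (j : Fin m) :
    (tensor2M A * (tensor2M B)ᵀ) i j = (∑ k, A i k * B j k) ^ 2 := by
  rw [Matrix.mul_apply]
  simp only [Matrix.transpose_apply, tensor2M, Matrix.of_apply, tensor2]
  rw [Fintype.sum_prod_type, sq, Finset.sum_mul_sum]
  congr 1; ext k; congr 1; ext l; ring

lemma frob_tensor2M {n d : ℕ} (C : Matrix (Fin n) (Fin d) ℝ) :
    frob (tensor2M C) ^ 2 = ∑ i, (∑ k, C i k ^ 2) ^ 2 := by
  rw [frob, Real.sq_sqrt (by positivity)]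
  refine Finset.sum_congr rfl fun i _ => ?_
  simp only [tensor2M, Matrix.of_apply, tensor2]
  rw [Fintype.sum_prod_type, sq, Finset.sum_mul_sum]
  congr 1; ext k; congr 1; ext l; ring

lemma frob_nonneg {n m : Type*} [Fintype n] [Fintype m] (M : Matrix n m ℝ) : 0 ≤ frob M :=
  Real.sqrt_nonneg _

lemma norm2_nonneg {d : ℕ} (x : Fin d → ℝ) : 0 ≤ norm2 x := Real.sqrt_nonneg _

lemma norm2_sq {d : ℕ} (x : Fin d → ℝ) : norm2 x ^ 2 = ∑ i, x i ^ 2 := by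
  rw [norm2, Real.sq_sqrt (by positivity)]

lemma abs_dot_le {d : ℕ} (x y : Fin d → ℝ) : |dotProduct x y| ≤ norm2 x * norm2 y := by
  have h := Finset.sum_mul_sq_le_sq_mul_sq Finset.univ x y
  have h2 : |dotProduct x y| = Real.sqrt ((∑ i, x i * y i) ^ 2) := by
    rw [Real.sqrt_sq_eq_abs]; rfl
  rw [h2, norm2, norm2, ← Real.sqrt_mul (by positivity)]
  exact Real.sqrt_le_sqrt h

/-- The error random variable for a pair of vectors. -/
noncomputable def ZZ {Ω : Type*} {d r : ℕ} (S : Ω → Matrix (Fin d) (Fin r) ℝ)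
    (x y : Fin d → ℝ) : Ω → ℝ :=
  fun ω => dotProduct ((S ω)ᵀ *ᵥ x) ((S ω)ᵀ *ᵥ y) - dotProduct x y

/-- The per-entry difference random variable. -/
noncomputable def dE {Ω : Type*} {d r : ℕ} (S : Ω → Matrix (Fin d) (Fin r) ℝ)
    (x y : Fin d → ℝ) : Ω → ℝ :=
  fun ω => ZZ S x y ω ^ 2 + 2 * dotProduct x y * ZZ S x y ω

set_option maxHeartbeats 2000000 in
theorem tensoring_Lt_bound {Ω : Type*} [MeasurableSpace Ω] (μ : Measure Ω)
    [IsProbabilityMeasure μ]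
    {d r n m : ℕ} (t : ℕ) (ht : 2 ≤ t) (hteven : Even t)
    (ε δ : ℝ) (hε0 : 0 < ε) (hε : ε ≤ 1 / 5) (hδ0 : 0 < δ) (hδ1 : δ < 1)
    (S : Ω → Matrix (Fin d) (Fin r) ℝ) (hSmeas : ∀ i j, Measurable fun ω => S ω i j)
    (hJL : ApproxBilinear μ ε δ t S) (hJL2 : ApproxBilinear μ ε δ (2 * t) S)
    (C : Matrix (Fin n) (Fin d) ℝ) (D : Matrix (Fin m) (Fin d) ℝ) :
    Lnorm μ (t : ℝ)
        (fun ω =>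
          frob (tensor2M (C * S ω) * (tensor2M (D * S ω))ᵀ - tensor2M C * (tensor2M D)ᵀ))
      ≤ Real.sqrt 5 * ε * δ ^ ((1 : ℝ) / t) * frob (tensor2M C) * frob (tensor2M D) := by
  have ht0 : (0:ℝ) < (t:ℝ) := by exact_mod_cast Nat.lt_of_lt_of_le Nat.zero_lt_two ht
  have ht1 : (1:ℝ) ≤ (t:ℝ) := by exact_mod_cast le_trans (by norm_num) ht
  have ht2 : (2:ℝ) ≤ (t:ℝ) := by exact_mod_cast ht
  set tr : ℝ := (t:ℝ) with htr
  set F : Ω → ℝ := fun ω =>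
    frob (tensor2M (C * S ω) * (tensor2M (D * S ω))ᵀ - tensor2M C * (tensor2M D)ᵀ) with hF
  -- pointwise identity
  have hFeq : ∀ ω, F ω = Real.sqrt (∑ i, ∑ j, dE S (C i) (D j) ω ^ 2) := by
    intro ω
    simp only [hF, frob]
    congr 1
    refine Finset.sum_congr rfl fun i _ => Finset.sum_congr rfl fun j _ => ?_
    congr 1
    rw [Matrix.sub_apply, tensor2M_mul_entry, tensor2M_mul_entry]
    have hdot : (∑ k, (C * S ω) i k * (D * S ω) j k)
        = ZZ S (C i) (D j) ω + dotProduct (C i) (D j) := by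
      unfold ZZ; rw [sub_add_cancel]
      simp only [dotProduct, Matrix.mulVec, Matrix.mul_apply, Matrix.transpose_apply]
      refine Finset.sum_congr rfl fun k _ => ?_
      congr 1 <;> exact Finset.sum_congr rfl fun a _ => mul_comm _ _
    rw [hdot, show (∑ k, C i k * D j k) = dotProduct (C i) (D j) from rfl]
    unfold dE; ring
  -- measurability
  have hZmeas : ∀ x y : Fin d → ℝ, Measurable (ZZ S x y) := by
    intro x y
    unfold ZZ
    refine Measurable.sub ?_ measurable_const
    simp only [dotProduct, Matrix.mulVec, Matrix.transpose_apply]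
    refine Finset.measurable_sum _ fun k _ => Measurable.mul ?_ ?_ <;>
      exact Finset.measurable_sum _ fun a _ => (hSmeas _ _).mul measurable_const
  have hdEmeas : ∀ x y, Measurable (dE S x y) := fun x y => by
    unfold dE; exact ((hZmeas x y).pow_const 2).add ((hZmeas x y).const_mul _)
  have hFmeas : Measurable F := by
    rw [show F = fun ω => Real.sqrt (∑ i, ∑ j, dE S (C i) (D j) ω ^ 2) from funext hFeq]
    exact (Finset.measurable_sum _ fun i _ =>
      Finset.measurable_sum _ fun j _ => (hdEmeas _ _).pow_const 2).sqrt
  have hFnonneg : ∀ ω, 0 ≤ F ω := fun ω => by rw [hFeq ω]; exact Real.sqrt_nonneg _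
  have hfrobC := frob_nonneg (tensor2M C)
  have hfrobD := frob_nonneg (tensor2M D)
  have hδ' : (0:ℝ) ≤ δ ^ ((1:ℝ)/tr) := Real.rpow_nonneg hδ0.le _
  by_cases hI : Integrable (fun ω => |F ω| ^ tr) μ
  swap
  · rw [show Lnorm μ tr F = 0 from by
      rw [Lnorm, integral_undef hI, Real.zero_rpow (by positivity)]]
    have h5 : (0:ℝ) ≤ Real.sqrt 5 := Real.sqrt_nonneg _
    exact mul_nonneg (mul_nonneg (mul_nonneg (mul_nonneg h5 hε0.le) hδ') hfrobC) hfrobD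
  · -- main case
    have hIF : Integrable (fun ω => F ω ^ t) μ := by
      have he : (fun ω => |F ω| ^ tr) = fun ω => F ω ^ t := by
        funext ω; rw [abs_of_nonneg (hFnonneg ω), htr, Real.rpow_natCast]
      rwa [he] at hI
    have hdle : ∀ (i : Fin n) (j : Fin m) ω, |dE S (C i) (D j) ω| ≤ F ω := by
      intro i j ω
      rw [hFeq ω, ← Real.sqrt_sq_eq_abs]
      apply Real.sqrt_le_sqrt
      have h1 := Finset.single_le_sum (s := (Finset.univ : Finset (Fin m)))
        (f := fun j' => dE S (C i) (D j') ω ^ 2) (fun _ _ => sq_nonneg _) (Finset.mem_univ j)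
      have h2 := Finset.single_le_sum (s := (Finset.univ : Finset (Fin n)))
        (f := fun i' => ∑ j', dE S (C i') (D j') ω ^ 2)
        (fun _ _ => Finset.sum_nonneg fun _ _ => sq_nonneg _) (Finset.mem_univ i)
      exact le_trans h1 h2
    have hZ2t_int : ∀ (i : Fin n) (j : Fin m),
        Integrable (fun ω => |ZZ S (C i) (D j) ω| ^ (2 * t)) μ := by
      intro i j
      have e4 : (4:ℝ)^t = 2^t * 2^t := by rw [← mul_pow]; norm_num
      have e8 : (8:ℝ)^t = 2^t * 4^t := by rw [← mul_pow]; norm_num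
      refine Integrable.mono' ((hIF.const_mul ((4:ℝ)^t)).add
        (integrable_const ((8:ℝ)^t * dotProduct (C i) (D j) ^ (2*t))))
        (((hZmeas _ _).abs.pow_const _).aestronglyMeasurable)
        (Filter.Eventually.of_forall fun ω => ?_)
      set z := ZZ S (C i) (D j) ω with hz
      set bb := dotProduct (C i) (D j) with hbb
      have hd1 : z^2 + 2*bb*z ≤ F ω := by
        have h := (abs_le.mp (hdle i j ω)).2
        unfold dE at h
        rw [← hz, ← hbb] at h
        exact h
      have h1 : z^2 ≤ 2*F ω + 4*bb^2 := by nlinarith [sq_nonneg (z + 2*bb)]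
      have h2 : |z| ^ (2*t) = (z^2)^t := by rw [pow_mul, sq_abs]
      rw [Real.norm_eq_abs, abs_of_nonneg (pow_nonneg (abs_nonneg _) _), h2]
      calc (z^2)^t ≤ (2*F ω + 4*bb^2)^t := pow_le_pow_left₀ (sq_nonneg z) h1 t
        _ ≤ 2^t * ((2*F ω)^t + (4*bb^2)^t) :=
            add_pow_le' (by nlinarith [hFnonneg ω]) (by positivity) t
        _ = 4^t * F ω ^ t + 8^t * bb^(2*t) := by
            rw [mul_pow 2 (F ω) t, mul_pow 4 (bb^2) t, ← pow_mul bb 2 t, mul_add,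
              ← mul_assoc, ← mul_assoc, ← mul_pow, ← mul_pow]
            norm_num
            rw [mul_pow 4 (F ω) t, ← mul_pow 2 4 t]
            norm_num
    have hZt_int : ∀ (i : Fin n) (j : Fin m),
        Integrable (fun ω => |ZZ S (C i) (D j) ω| ^ t) μ := by
      intro i j
      refine Integrable.mono' ((integrable_const (1:ℝ)).add (hZ2t_int i j))
        (((hZmeas _ _).abs.pow_const _).aestronglyMeasurable)
        (Filter.Eventually.of_forall fun ω => ?_)
      rw [Real.norm_eq_abs, abs_of_nonneg (pow_nonneg (abs_nonneg _) _)]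
      exact pow_le_one_add_pow (abs_nonneg _) t
    -- eLpNorm bounds from the hypotheses
    set pt : ℝ≥0∞ := ENNReal.ofReal tr with hpt
    set p2t : ℝ≥0∞ := ENNReal.ofReal (2*tr) with hp2t
    set ph : ℝ≥0∞ := ENNReal.ofReal (tr/2) with hph
    have hpt1 : (1:ℝ≥0∞) ≤ pt := ENNReal.one_le_ofReal.mpr ht1
    have hph1 : (1:ℝ≥0∞) ≤ ph := ENNReal.one_le_ofReal.mpr (by linarith)
    have hptmul : ph * ENNReal.ofReal 2 = pt := by
      rw [hph, hpt, ← ENNReal.ofReal_mul (by linarith)]; congr 1; ring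
    have hptmul2 : pt * ENNReal.ofReal 2 = p2t := by
      rw [hpt, hp2t, ← ENNReal.ofReal_mul (by linarith)]; congr 1; ring
    have hZt_elp : ∀ (i : Fin n) (j : Fin m), eLpNorm (ZZ S (C i) (D j)) pt μ
        ≤ ENNReal.ofReal (ε * δ ^ ((1:ℝ)/tr) * norm2 (C i) * norm2 (D j)) := by
      intro i j
      rw [hpt, ← ofReal_Lnorm_eq μ ht0 (by
        have he : (fun ω => |ZZ S (C i) (D j) ω| ^ tr) = fun ω => |ZZ S (C i) (D j) ω| ^ t := by
          funext ω; rw [htr, Real.rpow_natCast]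
        rw [he]; exact hZt_int i j)]
      exact ENNReal.ofReal_le_ofReal (hJL (C i) (D j))
    have h2tr : ((2*t : ℕ):ℝ) = 2*tr := by push_cast [htr]; ring
    have hZ2t_elp : ∀ (i : Fin n) (j : Fin m), eLpNorm (ZZ S (C i) (D j)) p2t μ
        ≤ ENNReal.ofReal (ε * δ ^ ((1:ℝ)/(2*tr)) * norm2 (C i) * norm2 (D j)) := by
      intro i j
      have hj := hJL2 (C i) (D j)
      rw [h2tr] at hj
      rw [hp2t, ← ofReal_Lnorm_eq μ (by linarith) (by
        have he : (fun ω => |ZZ S (C i) (D j) ω| ^ (2*tr))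
            = fun ω => |ZZ S (C i) (D j) ω| ^ (2*t : ℕ) := by
          funext ω; rw [← h2tr, Real.rpow_natCast]
        rw [he]; exact hZ2t_int i j)]
      exact ENNReal.ofReal_le_ofReal hj
    -- squaring identities for eLpNorm
    have habs2 : ∀ (g : Ω → ℝ), (fun ω => ‖g ω‖ ^ (2:ℝ)) = fun ω => g ω ^ 2 := by
      intro g; funext ω
      rw [show (2:ℝ) = ((2:ℕ):ℝ) by norm_num, Real.rpow_natCast, Real.norm_eq_abs, sq_abs]
    have hsq_elp : ∀ (g : Ω → ℝ) (p : ℝ≥0∞), eLpNorm (fun ω => g ω ^ 2) p μ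
        = eLpNorm g (p * ENNReal.ofReal 2) μ ^ (2:ℝ) := by
      intro g p
      rw [← habs2 g, eLpNorm_norm_rpow g (by norm_num : (0:ℝ) < 2)]
    have hδδ : (δ ^ ((1:ℝ)/(2*tr)))^(2:ℕ) = δ ^ ((1:ℝ)/tr) := by
      have htne : tr ≠ 0 := ne_of_gt ht0
      rw [← Real.rpow_natCast (δ ^ ((1:ℝ)/(2*tr))) 2, ← Real.rpow_mul hδ0.le]
      congr 1
      push_cast
      field_simp
    -- per-entry eLpNorm bound
    have hdE_elp : ∀ (i : Fin n) (j : Fin m), eLpNorm (dE S (C i) (D j)) pt μ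
        ≤ ENNReal.ofReal ((ε^2 + 2*ε) * δ ^ ((1:ℝ)/tr)
            * (norm2 (C i)^2 * norm2 (D j)^2)) := by
      intro i j
      have hsplit : dE S (C i) (D j) = (fun ω => ZZ S (C i) (D j) ω ^ 2)
          + (2 * dotProduct (C i) (D j)) • ZZ S (C i) (D j) := by
        funext ω; simp only [Pi.add_apply, Pi.smul_apply, smul_eq_mul]; unfold dE; ring
      rw [hsplit]
      refine le_trans (eLpNorm_add_le (((hZmeas _ _).pow_const 2).aestronglyMeasurable)
        (((hZmeas _ _).const_smul (2 * dotProduct (C i) (D j))).aestronglyMeasurable) hpt1)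
        ?_
      have h1 : eLpNorm (fun ω => ZZ S (C i) (D j) ω ^ 2) pt μ
          ≤ ENNReal.ofReal (ε^2 * δ ^ ((1:ℝ)/tr) * (norm2 (C i)^2 * norm2 (D j)^2)) := by
        rw [hsq_elp, hptmul2]
        refine le_trans (ENNReal.rpow_le_rpow (hZ2t_elp i j) (by norm_num)) ?_
        rw [ENNReal.ofReal_rpow_of_nonneg (mul_nonneg (mul_nonneg (mul_nonneg hε0.le
          (Real.rpow_nonneg hδ0.le _)) (norm2_nonneg _)) (norm2_nonneg _)) (by norm_num)]
        apply ENNReal.ofReal_le_ofReal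
        apply le_of_eq
        rw [show (2:ℝ) = ((2:ℕ):ℝ) from by norm_num, Real.rpow_natCast, ← hδδ]
        ring
      have h2 : eLpNorm ((2 * dotProduct (C i) (D j)) • ZZ S (C i) (D j)) pt μ
          ≤ ENNReal.ofReal (2*ε * δ ^ ((1:ℝ)/tr) * (norm2 (C i)^2 * norm2 (D j)^2)) := by
        rw [eLpNorm_const_smul]
        have hb : ‖2 * dotProduct (C i) (D j)‖ₑ
            = ENNReal.ofReal (2 * |dotProduct (C i) (D j)|) := by
          rw [← ofReal_norm, Real.norm_eq_abs, abs_mul, abs_two]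
        rw [hb]
        refine le_trans (mul_le_mul' le_rfl (hZt_elp i j)) ?_
        rw [← ENNReal.ofReal_mul (by positivity)]
        apply ENNReal.ofReal_le_ofReal
        have habsb := abs_dot_le (C i) (D j)
        have hc0 := norm2_nonneg (C i)
        have hd0 := norm2_nonneg (D j)
        have hb0 := abs_nonneg (dotProduct (C i) (D j))
        nlinarith [mul_nonneg (mul_nonneg hε0.le hδ') (mul_nonneg hc0 hd0)]
      refine le_trans (add_le_add h1 h2) ?_
      rw [← ENNReal.ofReal_add (by positivity) (by positivity)]
      exact ENNReal.ofReal_le_ofReal (le_of_eq (by ring))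
    -- final quantity
    set R : ℝ := Real.sqrt 5 * ε * δ ^ ((1:ℝ)/tr) * frob (tensor2M C) * frob (tensor2M D)
      with hR
    have hR0 : 0 ≤ R := by
      rw [hR]
      exact mul_nonneg (mul_nonneg (mul_nonneg
        (mul_nonneg (Real.sqrt_nonneg 5) hε0.le) hδ') hfrobC) hfrobD
    have hkey : eLpNorm F pt μ ≤ ENNReal.ofReal R := by
      rw [← ENNReal.rpow_le_rpow_iff (show (0:ℝ) < 2 by norm_num)]
      have e1 : eLpNorm F pt μ ^ (2:ℝ)
          = eLpNorm (fun ω => ∑ i, ∑ j, dE S (C i) (D j) ω ^ 2) ph μ := by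
        rw [← hptmul, ← hsq_elp F ph]
        congr 1
        funext ω
        rw [hFeq ω, Real.sq_sqrt (by positivity)]
      rw [e1]
      have e2 : (fun ω => ∑ i, ∑ j, dE S (C i) (D j) ω ^ 2)
          = ∑ i, fun ω => ∑ j, dE S (C i) (D j) ω ^ 2 := by
        funext ω; rw [Finset.sum_apply]
      have e2' : ∀ i : Fin n, (fun ω => ∑ j, dE S (C i) (D j) ω ^ 2)
          = ∑ j, fun ω => dE S (C i) (D j) ω ^ 2 := by
        intro i; funext ω; rw [Finset.sum_apply]
      have hmeas2 : ∀ (i : Fin n) (j : Fin m),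
          AEStronglyMeasurable (fun ω => dE S (C i) (D j) ω ^ 2) μ :=
        fun i j => ((hdEmeas _ _).pow_const 2).aestronglyMeasurable
      have e3 : ∀ (i : Fin n) (j : Fin m),
          eLpNorm (fun ω => dE S (C i) (D j) ω ^ 2) ph μ
          ≤ ENNReal.ofReal (((ε^2+2*ε) * δ ^ ((1:ℝ)/tr)
              * (norm2 (C i)^2 * norm2 (D j)^2))^2) := by
        intro i j
        rw [hsq_elp, hptmul]
        refine le_trans (ENNReal.rpow_le_rpow (hdE_elp i j) (by norm_num)) ?_
        rw [ENNReal.ofReal_rpow_of_nonneg (by positivity) (by norm_num)]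
        apply ENNReal.ofReal_le_ofReal
        apply le_of_eq
        rw [← Real.rpow_natCast ((ε^2+2*ε) * δ ^ ((1:ℝ)/tr)
          * (norm2 (C i)^2 * norm2 (D j)^2)) 2]
        norm_num
      have tri : eLpNorm (fun ω => ∑ i, ∑ j, dE S (C i) (D j) ω ^ 2) ph μ
          ≤ ∑ i, ∑ j, ENNReal.ofReal (((ε^2+2*ε) * δ ^ ((1:ℝ)/tr)
              * (norm2 (C i)^2 * norm2 (D j)^2))^2) := by
        rw [e2]
        refine le_trans (eLpNorm_sum_le (fun i _ => ?_) hph1) ?_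
        · exact Finset.aestronglyMeasurable_fun_sum _ fun j _ => hmeas2 i j
        refine Finset.sum_le_sum fun i _ => ?_
        rw [e2' i]
        refine le_trans (eLpNorm_sum_le (fun j _ => hmeas2 i j) hph1) ?_
        exact Finset.sum_le_sum fun j _ => e3 i j
      refine le_trans tri ?_
      have merge : ∀ i : Fin n, ∑ j, ENNReal.ofReal (((ε^2+2*ε) * δ ^ ((1:ℝ)/tr)
              * (norm2 (C i)^2 * norm2 (D j)^2))^2)
          = ENNReal.ofReal (∑ j, (((ε^2+2*ε) * δ ^ ((1:ℝ)/tr)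
              * (norm2 (C i)^2 * norm2 (D j)^2))^2)) := by
        intro i
        rw [ENNReal.ofReal_sum_of_nonneg (fun j _ => by positivity)]
      have merge2 : (∑ i, ∑ j, ENNReal.ofReal (((ε^2+2*ε) * δ ^ ((1:ℝ)/tr)
              * (norm2 (C i)^2 * norm2 (D j)^2))^2))
          = ENNReal.ofReal (∑ i, ∑ j, (((ε^2+2*ε) * δ ^ ((1:ℝ)/tr)
              * (norm2 (C i)^2 * norm2 (D j)^2))^2)) := by
        rw [ENNReal.ofReal_sum_of_nonneg
          (fun i _ => Finset.sum_nonneg fun j _ => by positivity)]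
        exact Finset.sum_congr rfl fun i _ => merge i
      rw [merge2]
      rw [show (ENNReal.ofReal R) ^ (2:ℝ) = ENNReal.ofReal (R^2) from by
        rw [ENNReal.ofReal_rpow_of_nonneg hR0 (by norm_num), ← Real.rpow_natCast R 2]
        norm_num]
      apply ENNReal.ofReal_le_ofReal
      have hsum : (∑ i, ∑ j, (((ε^2+2*ε) * δ ^ ((1:ℝ)/tr)
              * (norm2 (C i)^2 * norm2 (D j)^2))^2))
          = (ε^2+2*ε)^2 * (δ ^ ((1:ℝ)/tr))^2
            * ((∑ i, (norm2 (C i)^2)^2) * (∑ j, (norm2 (D j)^2)^2)) := by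
        have inner : ∀ i : Fin n, ∑ j, (((ε^2+2*ε) * δ ^ ((1:ℝ)/tr)
              * (norm2 (C i)^2 * norm2 (D j)^2))^2)
            = ((ε^2+2*ε)^2 * (δ ^ ((1:ℝ)/tr))^2 * (norm2 (C i)^2)^2)
              * ∑ j, (norm2 (D j)^2)^2 := by
          intro i
          rw [Finset.mul_sum]
          exact Finset.sum_congr rfl fun j _ => by ring
        rw [Finset.sum_congr rfl fun i _ => inner i, ← Finset.sum_mul, ← Finset.mul_sum,
          mul_assoc]
      rw [hsum]
      have hfc : (∑ i, (norm2 (C i)^2)^2) = frob (tensor2M C)^2 := by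
        rw [frob_tensor2M]
        exact Finset.sum_congr rfl fun i _ => by rw [norm2_sq]
      have hfd : (∑ j, (norm2 (D j)^2)^2) = frob (tensor2M D)^2 := by
        rw [frob_tensor2M]
        exact Finset.sum_congr rfl fun j _ => by rw [norm2_sq]
      rw [hfc, hfd, hR]
      have h5 : Real.sqrt 5 ^ 2 = 5 := Real.sq_sqrt (by norm_num)
      have hkap : (ε^2 + 2*ε)^2 ≤ 5 * ε^2 := by
        have h21 : (ε+2)^2 ≤ 5 := by nlinarith
        have he : (ε^2+2*ε)^2 = (ε+2)^2 * ε^2 := by ring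
        rw [he, show (5:ℝ) * ε^2 = 5 * ε^2 from rfl]
        exact mul_le_mul_of_nonneg_right h21 (sq_nonneg ε)
      calc (ε^2+2*ε)^2 * (δ ^ ((1:ℝ)/tr))^2 * (frob (tensor2M C)^2 * frob (tensor2M D)^2)
          ≤ 5 * ε^2 * ((δ ^ ((1:ℝ)/tr))^2 * (frob (tensor2M C)^2 * frob (tensor2M D)^2)) := by
            rw [mul_assoc]
            exact mul_le_mul_of_nonneg_right hkap (by positivity)
        _ = (Real.sqrt 5 * ε * δ ^ ((1:ℝ)/tr) * frob (tensor2M C) * frob (tensor2M D))^2 := by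
            rw [show (Real.sqrt 5 * ε * δ ^ ((1:ℝ)/tr) * frob (tensor2M C)
              * frob (tensor2M D))^2 = Real.sqrt 5 ^2 * ε^2 * ((δ ^ ((1:ℝ)/tr))^2
              * (frob (tensor2M C)^2 * frob (tensor2M D)^2)) from by ring, h5]
    rw [Lnorm_eq_toReal μ ht0 hI, ← hpt]
    exact ENNReal.toReal_le_of_le_ofReal hR0 hkey
end

section
/- Let n = t · b for positive integers t, b, and let A, B ∈ ℝ^{n×m} and C ∈ ℝ^{n×k}. Denote by a_i, b_i, c_i the i-th rows of A, B, C. For l ∈ [t] let B_l = {(l−1)b+1, …, lb}, let A_l, B_l, C_l be the submatrices of A, B, C consisting of the rows with indices in the l-th block, let Z_l := ∑_{j ≤ (l−1)b} b_j c_j^⊤ ∈ ℝ^{m×k}, and let P_l := lt(A_l B_l^⊤) C_l ∈ ℝ^{b×k}. Then for every l ∈ [t] and every i = (l−1)b + i' with i' ∈ [b], the i-th row of lt(A B^⊤) C equals the i'-th row of P_l plus a_i^⊤ Z_l. -/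
open Matrix

/-- Lower-triangular part of a square matrix: keep entries `M i j` with `j ≤ i`, zero the rest. -/
def ltMat {N : ℕ} (M : Matrix (Fin N) (Fin N) ℝ) : Matrix (Fin N) (Fin N) ℝ :=
  Matrix.of fun i j => if (j : ℕ) ≤ (i : ℕ) then M i j else 0

/-- The global index of the `i'`-th row within the `l`-th block of size `b`. -/
def blockIdx {t b : ℕ} (l : Fin t) (i' : Fin b) : Fin (t * b) :=
  ⟨l.1 * b + i'.1, by
    calc l.1 * b + i'.1 < l.1 * b + b := by omega
      _ = (l.1 + 1) * b := by ring
      _ ≤ t * b := Nat.mul_le_mul_right b l.2⟩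

lemma sum_split {t b : ℕ} (l : Fin t) (i' : Fin b) (F : Fin (t * b) → ℝ) :
    ∑ j ∈ Finset.univ.filter (fun j : Fin (t * b) => (j : ℕ) ≤ (blockIdx l i' : ℕ)), F j
    = ∑ j' ∈ Finset.univ.filter (fun j' : Fin b => (j' : ℕ) ≤ (i' : ℕ)), F (blockIdx l j')
      + ∑ j ∈ Finset.univ.filter (fun j : Fin (t * b) => (j : ℕ) < l.1 * b), F j := by
  rw [← Finset.sum_filter_add_sum_filter_not
    (Finset.univ.filter (fun j : Fin (t * b) => (j : ℕ) ≤ (blockIdx l i' : ℕ)))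
    (fun j => (j : ℕ) < l.1 * b), add_comm]
  rw [Finset.filter_filter, Finset.filter_filter]
  congr 1
  · refine (Finset.sum_nbij' (fun j' : Fin b => blockIdx l j')
      (fun j : Fin (t * b) => ⟨min ((j : ℕ) - l.1 * b) i'.1, lt_of_le_of_lt (min_le_right _ _) i'.2⟩)
      ?_ ?_ ?_ ?_ ?_).symm
    · intro j' hj'
      simp only [Finset.mem_filter, Finset.mem_univ, true_and, blockIdx] at hj' ⊢
      exact Finset.mem_filter.mpr ⟨Finset.mem_univ _, by simp only [Fin.val_mk]; omega⟩
    · intro j hj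
      simp only [Finset.mem_filter, Finset.mem_univ, true_and, blockIdx] at hj ⊢
      omega
    · intro j' hj'
      simp only [Finset.mem_filter, Finset.mem_univ, true_and, blockIdx] at hj'
      apply Fin.ext
      simp only [blockIdx]
      omega
    · intro j hj
      simp only [Finset.mem_filter, Finset.mem_univ, true_and, blockIdx] at hj
      replace hj := (Finset.mem_filter.mp hj).2
      apply Fin.ext
      simp only [blockIdx]
      omega
    · intro j' hj'
      rfl
  · apply Finset.sum_congr _ (fun _ _ => rfl)
    apply Finset.filter_congr
    intro j _
    simp only [blockIdx, eq_iff_iff]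
    omega

theorem block_lower_triangular_multiplication {t b m k : ℕ}
    (A B : Matrix (Fin (t * b)) (Fin m) ℝ) (C : Matrix (Fin (t * b)) (Fin k) ℝ)
    (Z : Fin t → Matrix (Fin m) (Fin k) ℝ)
    (hZ : ∀ l : Fin t, Z l =
      ∑ j ∈ Finset.univ.filter (fun j : Fin (t * b) => (j : ℕ) < l.1 * b),
        vecMulVec (B j) (C j))
    (P : Fin t → Matrix (Fin b) (Fin k) ℝ)
    (hP : ∀ l : Fin t, P l =
      ltMat (Matrix.of (fun i' : Fin b => A (blockIdx l i'))
          * (Matrix.of (fun i' : Fin b => B (blockIdx l i')))ᵀ)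
        * Matrix.of (fun i' : Fin b => C (blockIdx l i')))
    (l : Fin t) (i' : Fin b) :
    (ltMat (A * Bᵀ) * C) (blockIdx l i') = P l i' + A (blockIdx l i') ᵥ* Z l := by
  funext c
  simp only [hP, hZ, Pi.add_apply, mul_apply, ltMat, Matrix.of_apply, vecMul, dotProduct,
    Finset.sum_apply, Matrix.sum_apply, vecMulVec_apply, transpose_apply, ite_mul, zero_mul]
  rw [← Finset.sum_filter, ← Finset.sum_filter, sum_split l i'
    (fun j => (∑ x, A (blockIdx l i') x * B j x) * C j c)]
  congr 1
  simp only [Finset.mul_sum, Finset.sum_mul, mul_assoc]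
  rw [Finset.sum_comm]
end
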